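/- Let ρ be a density operator on a Hilbert space H and P a positive operator with P ≤ 1 (identity) and tr(Pρ) > 0. Then the fidelity F(ρ, √P ρ √P / tr(Pρ)) ≥ √(tr(Pρ)). -/

import Mathlib

open scoped ComplexOrder

/-- The trace norm (Schatten 1-norm) of a complex matrix: the trace of `√(Aᴴ A)`. -/
noncomputable def traceNorm {n : Type*} [Fintype n] [DecidableEq n]
    (A : Matrix n n ℂ) : ℝ :=
  ((Matrix.posSemidef_conjTranspose_mul_self A).1.eigenvectorUnitary.1 *
    Matrix.diagonal ((fun x : ℝ => (x : ℂ)) ∘ Real.sqrt ∘ (Matrix.posSemidef_conjTranspose_mul_self A).1.eigenvalues) *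
    (star (Matrix.posSemidef_conjTranspose_mul_self A).1.eigenvectorUnitary : Matrix n n ℂ)).trace.re

open Classical in
/-- Square root of a positive semidefinite matrix (junk value `0` otherwise). -/
noncomputable def matSqrt {n : Type*} [Fintype n] [DecidableEq n]
    (A : Matrix n n ℂ) : Matrix n n ℂ :=
  if h : A.PosSemidef then h.1.eigenvectorUnitary.1 *
    Matrix.diagonal ((fun x : ℝ => (x : ℂ)) ∘ Real.sqrt ∘ h.1.eigenvalues) * (star h.1.eigenvectorUnitary : Matrix n n ℂ) else 0

/-- The fidelity `F(ρ,σ) = ‖√ρ √σ‖₁` between two density matrices. -/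
noncomputable def fidelity {n : Type*} [Fintype n] [DecidableEq n]
    (ρ σ : Matrix n n ℂ) : ℝ :=
  traceNorm (matSqrt ρ * matSqrt σ)

noncomputable def Matrix.PosSemidef.sqrt {n : Type*} [Fintype n] [DecidableEq n]
    {A : Matrix n n ℂ} (hA : A.PosSemidef) : Matrix n n ℂ :=
  hA.1.eigenvectorUnitary.1 * Matrix.diagonal ((RCLike.ofReal : ℝ → ℂ) ∘ Real.sqrt ∘ hA.1.eigenvalues) *
    (star hA.1.eigenvectorUnitary : Matrix n n ℂ)

open scoped MatrixOrder in
lemma Matrix.PosSemidef.sqrt_eq_cfc' {n : Type*} [Fintype n] [DecidableEq n]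
    {A : Matrix n n ℂ} (hA : A.PosSemidef) : hA.sqrt = CFC.sqrt A := by
  rw [CFC.sqrt_eq_cfc, cfc_nnreal_eq_real _ A hA.nonneg, hA.1.cfc_eq]
  simp only [Matrix.IsHermitian.cfc, Unitary.conjStarAlgAut_apply, Matrix.PosSemidef.sqrt, Unitary.coe_star]
  congr 3
  funext i
  simp [Real.coe_toNNReal', hA.eigenvalues_nonneg]

open scoped MatrixOrder in
lemma Matrix.PosSemidef.posSemidef_sqrt {n : Type*} [Fintype n] [DecidableEq n]
    {A : Matrix n n ℂ} (hA : A.PosSemidef) : hA.sqrt.PosSemidef := by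
  rw [hA.sqrt_eq_cfc']
  exact Matrix.nonneg_iff_posSemidef.mp (CFC.sqrt_nonneg A)

open scoped MatrixOrder in
lemma Matrix.PosSemidef.sqrt_mul_self {n : Type*} [Fintype n] [DecidableEq n]
    {A : Matrix n n ℂ} (hA : A.PosSemidef) : hA.sqrt * hA.sqrt = A := by
  rw [hA.sqrt_eq_cfc']
  exact CFC.sqrt_mul_sqrt_self A hA.nonneg

lemma Matrix.PosSemidef.sq_sqrt {n : Type*} [Fintype n] [DecidableEq n]
    {A : Matrix n n ℂ} (hA : A.PosSemidef) : hA.sqrt ^ 2 = A := by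
  rw [sq, hA.sqrt_mul_self]

open scoped MatrixOrder in
lemma Matrix.PosSemidef.eq_sqrt_of_sq_eq {n : Type*} [Fintype n] [DecidableEq n]
    {A : Matrix n n ℂ} (hA : A.PosSemidef) {B : Matrix n n ℂ} (hB : B.PosSemidef)
    (h : A ^ 2 = B) : A = hB.sqrt := by
  rw [hB.sqrt_eq_cfc', ← h, CFC.sqrt_sq A hA.nonneg]

namespace GentleAux

open Polynomial Matrix

variable {n : Type*} [Fintype n] [DecidableEq n]

/-- Conjugation by a unitary matrix, as an algebra homomorphism. -/
noncomputable def unitaryConj (U : Matrix.unitaryGroup n ℂ) :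
    Matrix n n ℂ →ₐ[ℂ] Matrix n n ℂ where
  toFun X := (U : Matrix n n ℂ) * X * star (U : Matrix n n ℂ)
  map_one' := show (U : Matrix n n ℂ) * 1 * star (U : Matrix n n ℂ) = 1 by
    rw [Matrix.mul_one]
    exact Matrix.mem_unitaryGroup_iff.mp U.2
  map_mul' X Y := show (U : Matrix n n ℂ) * (X * Y) * star (U : Matrix n n ℂ) = _ by
    have h : star (U : Matrix n n ℂ) * (U : Matrix n n ℂ) = 1 :=
      Matrix.mem_unitaryGroup_iff'.mp U.2
    simp only [Matrix.mul_assoc]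
    rw [← Matrix.mul_assoc (star (U : Matrix n n ℂ)) (U : Matrix n n ℂ), h, Matrix.one_mul]
  map_zero' := show (U : Matrix n n ℂ) * 0 * star (U : Matrix n n ℂ) = 0 by simp
  map_add' X Y := show (U : Matrix n n ℂ) * (X + Y) * star (U : Matrix n n ℂ) = _ by
    rw [Matrix.mul_add, Matrix.add_mul]
  commutes' r := show (U : Matrix n n ℂ) * algebraMap ℂ _ r * star (U : Matrix n n ℂ) = _ by
    simp only [Algebra.algebraMap_eq_smul_one]
    rw [Matrix.mul_smul, Matrix.mul_one, Matrix.smul_mul]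
    rw [Matrix.mem_unitaryGroup_iff.mp U.2]

lemma aeval_unitaryConj (U : Matrix.unitaryGroup n ℂ) (D : Matrix n n ℂ) (p : ℂ[X]) :
    aeval ((U : Matrix n n ℂ) * D * star (U : Matrix n n ℂ)) p
      = (U : Matrix n n ℂ) * aeval D p * star (U : Matrix n n ℂ) :=
  aeval_algHom_apply (unitaryConj U) D p

lemma aeval_diagonal (v : n → ℂ) (p : ℂ[X]) :
    aeval (Matrix.diagonal v) p = Matrix.diagonal (fun i => p.eval (v i)) := by
  have h := aeval_algHom_apply (Matrix.diagonalAlgHom (R := ℂ)) v p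
  simp only [Matrix.diagonalAlgHom_apply] at h
  rw [h]
  have hv : aeval v p = fun i => p.eval (v i) := by
    funext i
    have h2 := aeval_algHom_apply (Pi.evalAlgHom ℂ (fun _ : n => ℂ) i) v p
    simp only [Pi.evalAlgHom_apply] at h2
    rw [← h2]
    exact congrFun (Polynomial.coe_aeval_eq_eval (v i)) p
  rw [hv]

lemma sqrt_eq_aeval {C : Matrix n n ℂ} (hC : C.PosSemidef) (p : ℂ[X])
    (hp : ∀ i, p.eval ((hC.1.eigenvalues i : ℝ) : ℂ) = ((Real.sqrt (hC.1.eigenvalues i) : ℝ) : ℂ)) :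
    hC.sqrt = aeval C p := by
  conv_rhs => rw [hC.1.spectral_theorem]
  rw [Unitary.conjStarAlgAut_apply, aeval_unitaryConj, aeval_diagonal]
  have hd : (fun i => p.eval ((RCLike.ofReal ∘ hC.1.eigenvalues) i))
      = (RCLike.ofReal ∘ Real.sqrt ∘ hC.1.eigenvalues : n → ℂ) := by
    funext i
    simpa using hp i
  rw [hd, Matrix.PosSemidef.sqrt]

lemma trace_aeval (p : ℂ[X]) (C : Matrix n n ℂ) :
    (aeval C p).trace
      = ∑ k ∈ Finset.range (p.natDegree + 1), p.coeff k * (C ^ k).trace := by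
  rw [aeval_eq_sum_range, Matrix.trace_sum]
  exact Finset.sum_congr rfl fun k _ => by rw [Matrix.trace_smul, smul_eq_mul]

lemma pow_mul_swap (a b : Matrix n n ℂ) (k : ℕ) : (a * b) ^ k * a = a * (b * a) ^ k := by
  have h : SemiconjBy a (b * a) (a * b) := (Matrix.mul_assoc a b a).symm
  exact (h.pow_right k).symm

lemma trace_pow_mul_swap (a b : Matrix n n ℂ) (k : ℕ) :
    ((a * b) ^ k).trace = ((b * a) ^ k).trace := by
  cases k with
  | zero => rfl
  | succ k =>
      rw [pow_succ, ← Matrix.mul_assoc, pow_mul_swap, Matrix.trace_mul_comm,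
        ← Matrix.mul_assoc, ← pow_succ']

/-- The trace norm of `A` is also the trace of `√(A Aᴴ)`. -/
lemma traceNorm_eq_self_mul_conjTranspose (A : Matrix n n ℂ) :
    traceNorm A = ((Matrix.posSemidef_self_mul_conjTranspose A).sqrt.trace).re := by
  classical
  have h1 : (Aᴴ * A).PosSemidef := Matrix.posSemidef_conjTranspose_mul_self A
  have h2 : (A * Aᴴ).PosSemidef := Matrix.posSemidef_self_mul_conjTranspose A
  set s : Finset ℂ :=
      (Finset.univ.image (fun i => ((h1.1.eigenvalues i : ℝ) : ℂ)))
        ∪ (Finset.univ.image (fun i => ((h2.1.eigenvalues i : ℝ) : ℂ))) with hs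
  set p : ℂ[X] := Lagrange.interpolate s id (fun z => ((Real.sqrt z.re : ℝ) : ℂ)) with hpdef
  have hinj : Set.InjOn id (s : Set ℂ) := Function.injective_id.injOn
  have hnode : ∀ x ∈ s, p.eval x = ((Real.sqrt x.re : ℝ) : ℂ) := fun x hx =>
    Lagrange.eval_interpolate_at_node _ hinj hx
  have e1 : h1.sqrt = aeval (Aᴴ * A) p := by
    refine sqrt_eq_aeval h1 p fun i => ?_
    rw [hnode _ (Finset.mem_union_left _ (Finset.mem_image_of_mem _ (Finset.mem_univ i)))]
    simp
  have e2 : h2.sqrt = aeval (A * Aᴴ) p := by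
    refine sqrt_eq_aeval h2 p fun i => ?_
    rw [hnode _ (Finset.mem_union_right _ (Finset.mem_image_of_mem _ (Finset.mem_univ i)))]
    simp
  have htr : h1.sqrt.trace = h2.sqrt.trace := by
    rw [e1, e2, trace_aeval, trace_aeval]
    exact Finset.sum_congr rfl fun k _ => by rw [trace_pow_mul_swap Aᴴ A k]
  exact congrArg Complex.re htr

lemma trace_nonneg {M : Matrix n n ℂ} (hM : M.PosSemidef) : 0 ≤ M.trace := by
  refine Finset.sum_nonneg fun i _ => ?_
  have h := hM.dotProduct_mulVec_nonneg (Pi.single i 1)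
  simpa [dotProduct, Matrix.mulVec_single, Pi.single_apply, Finset.sum_ite_eq] using h

lemma smul_posSemidef {M : Matrix n n ℂ} (hM : M.PosSemidef) {r : ℝ} (hr : 0 ≤ r) :
    ((r : ℂ) • M).PosSemidef := by
  constructor
  · show ((r : ℂ) • M)ᴴ = (r : ℂ) • M
    rw [Matrix.conjTranspose_smul, hM.1.eq]
    congr 1
    simp [Complex.conj_ofReal]
  · exact (hM.smul (Complex.zero_le_real.mpr hr)).2

lemma one_sub_sqrt {P : Matrix n n ℂ} (hP : P.PosSemidef) (hPle : (1 - P).PosSemidef) :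
    (1 - hP.sqrt).PosSemidef := by
  have hev : ∀ i, hP.1.eigenvalues i ≤ 1 := by
    intro i
    have hv := hPle.dotProduct_mulVec_nonneg ⇑(hP.1.eigenvectorBasis i)
    have hPv := hP.1.mulVec_eigenvectorBasis i
    have hvv : star ⇑(hP.1.eigenvectorBasis i) ⬝ᵥ ⇑(hP.1.eigenvectorBasis i) = 1 := by
      have h := hP.1.eigenvectorBasis.orthonormal.1 i
      have h2 : (inner ℂ (hP.1.eigenvectorBasis i) (hP.1.eigenvectorBasis i) : ℂ)
          = star ⇑(hP.1.eigenvectorBasis i) ⬝ᵥ ⇑(hP.1.eigenvectorBasis i) := by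
        rw [EuclideanSpace.inner_eq_star_dotProduct, dotProduct_comm]
      rw [← h2, inner_self_eq_norm_sq_to_K, h]
      simp
    rw [Matrix.sub_mulVec, Matrix.one_mulVec, hPv, dotProduct_sub, hvv,
      dotProduct_smul, hvv] at hv
    have h3 : (hP.1.eigenvalues i : ℝ) • (1 : ℂ) = ((hP.1.eigenvalues i : ℝ) : ℂ) := by
      rw [Complex.real_smul, mul_one]
    rw [h3] at hv
    have h4 := (Complex.nonneg_iff.mp hv).1
    simpa using h4
  have hV : (hP.1.eigenvectorUnitary : Matrix n n ℂ) * star (hP.1.eigenvectorUnitary : Matrix n n ℂ)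
      = 1 := Matrix.mem_unitaryGroup_iff.mp (hP.1.eigenvectorUnitary).2
  have hdiag : Matrix.diagonal (RCLike.ofReal ∘ Real.sqrt ∘ hP.1.eigenvalues : n → ℂ)
      = 1 - Matrix.diagonal (fun i => 1 - ((Real.sqrt (hP.1.eigenvalues i) : ℝ) : ℂ)) := by
    rw [← Matrix.diagonal_one, Matrix.diagonal_sub]
    refine congrArg Matrix.diagonal ?_
    funext i
    simp
  have e : 1 - hP.sqrt
      = (hP.1.eigenvectorUnitary : Matrix n n ℂ)
        * Matrix.diagonal (fun i => 1 - ((Real.sqrt (hP.1.eigenvalues i) : ℝ) : ℂ))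
        * star (hP.1.eigenvectorUnitary : Matrix n n ℂ) := by
    rw [Matrix.PosSemidef.sqrt, hdiag, Matrix.mul_sub, Matrix.mul_one, Matrix.sub_mul, hV]
    rw [sub_sub_cancel]
  rw [e]
  have hD : (Matrix.diagonal (fun i => 1 - ((Real.sqrt (hP.1.eigenvalues i) : ℝ) : ℂ))).PosSemidef := by
    refine Matrix.PosSemidef.diagonal ?_
    intro i
    show (0 : ℂ) ≤ 1 - ((Real.sqrt (hP.1.eigenvalues i) : ℝ) : ℂ)
    rw [Complex.nonneg_iff]
    constructor
    · simpa using sub_nonneg.mpr (Real.sqrt_le_one.mpr (hev i))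
    · simp
  have h := hD.mul_mul_conjTranspose_same (hP.1.eigenvectorUnitary : Matrix n n ℂ)
  rwa [← Matrix.star_eq_conjTranspose] at h

end GentleAux

open GentleAux Matrix in
/-- Winter's gentle measurement lemma: if `ρ` is a density operator and `P` a positive
operator with `P ≤ 1` and `tr(Pρ) > 0`, then `F(ρ, √P ρ √P / tr(Pρ)) ≥ √(tr(Pρ))`. -/
theorem stmt2 {d : Type*} [Fintype d] [DecidableEq d]
    (ρ P : Matrix d d ℂ)
    (hρ : ρ.PosSemidef) (hρ1 : ρ.trace = 1)
    (hP : P.PosSemidef) (hPle : (1 - P).PosSemidef)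
    (htr : 0 < ((P * ρ).trace).re) :
    Real.sqrt (((P * ρ).trace).re) ≤
      fidelity ρ (((P * ρ).trace)⁻¹ • (matSqrt P * ρ * matSqrt P)) := by
  classical
  have hQpsd : Matrix.PosSemidef hP.sqrt := hP.posSemidef_sqrt
  have hρs : Matrix.PosSemidef hρ.sqrt := hρ.posSemidef_sqrt
  have hTs' : Matrix.PosSemidef (hP.sqrt * ρ * hP.sqrt) := by
    have h := hρ.mul_mul_conjTranspose_same hP.sqrt
    rwa [hQpsd.1.eq] at h
  have hmsP : matSqrt P = hP.sqrt := dif_pos hP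
  have hmsρ : matSqrt ρ = hρ.sqrt := dif_pos hρ
  have hctr : (P * ρ).trace = (hP.sqrt * ρ * hP.sqrt).trace := by
    conv_lhs => rw [← hP.sqrt_mul_self]
    rw [Matrix.mul_assoc, Matrix.trace_mul_comm]
  have hc0 : 0 ≤ (P * ρ).trace := by
    rw [hctr]; exact trace_nonneg hTs'
  obtain ⟨hcre0, hcim⟩ := Complex.nonneg_iff.mp hc0
  have hcre : (P * ρ).trace = ((((P * ρ).trace).re : ℝ) : ℂ) := by
    apply Complex.ext <;> simp [← hcim]
  have ht0 : 0 < ((P * ρ).trace).re := htr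
  have hcinv : ((P * ρ).trace)⁻¹ = (((((P * ρ).trace).re)⁻¹ : ℝ) : ℂ) := by
    conv_lhs => rw [hcre]
    rw [← Complex.ofReal_inv]
  have hσ : (((P * ρ).trace)⁻¹ • (hP.sqrt * ρ * hP.sqrt)).PosSemidef := by
    rw [hcinv]; exact smul_posSemidef hTs' (inv_nonneg.mpr ht0.le)
  have hr0 : 0 ≤ Real.sqrt (((P * ρ).trace).re)⁻¹ := Real.sqrt_nonneg _
  have hrr : ((Real.sqrt (((P * ρ).trace).re)⁻¹ : ℝ) : ℂ) * ((Real.sqrt (((P * ρ).trace).re)⁻¹ : ℝ) : ℂ)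
      = (((((P * ρ).trace).re)⁻¹ : ℝ) : ℂ) := by
    rw [← Complex.ofReal_mul, Real.mul_self_sqrt (inv_nonneg.mpr ht0.le)]
  have hTsq := hTs'.posSemidef_sqrt
  have hsmulTsqrt : Matrix.PosSemidef (((Real.sqrt (((P * ρ).trace).re)⁻¹ : ℝ) : ℂ) • hTs'.sqrt) := smul_posSemidef hTsq hr0
  have hsqσ : matSqrt (((P * ρ).trace)⁻¹ • (hP.sqrt * ρ * hP.sqrt)) = ((Real.sqrt (((P * ρ).trace).re)⁻¹ : ℝ) : ℂ) • hTs'.sqrt := by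
    rw [matSqrt, dif_pos hσ]
    refine (hsmulTsqrt.eq_sqrt_of_sq_eq hσ ?_).symm
    rw [smul_pow, hTs'.sq_sqrt, sq, hrr, ← hcinv]
  have hBpsd : Matrix.PosSemidef (hρ.sqrt * hP.sqrt * hρ.sqrt) := by
    have h := hQpsd.mul_mul_conjTranspose_same hρ.sqrt
    rwa [hρs.1.eq] at h
  -- rewrite the goal
  rw [fidelity, hmsρ, hmsP, hsqσ, traceNorm_eq_self_mul_conjTranspose]
  -- compute M * Mᴴ
  have h1 : (hρ.sqrt * (((Real.sqrt (((P * ρ).trace).re)⁻¹ : ℝ) : ℂ) • hTs'.sqrt))ᴴ = (((Real.sqrt (((P * ρ).trace).re)⁻¹ : ℝ) : ℂ) • hTs'.sqrt) * hρ.sqrt := by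
    rw [Matrix.conjTranspose_mul, Matrix.conjTranspose_smul, hρs.1.eq, hTsq.1.eq]
    congr 1
    simp [Complex.conj_ofReal]
  have hmat : hρ.sqrt * hTs'.sqrt * (hTs'.sqrt * hρ.sqrt)
      = (hρ.sqrt * hP.sqrt * hρ.sqrt) * (hρ.sqrt * hP.sqrt * hρ.sqrt) := by
    have h2 : (hρ.sqrt * hP.sqrt * hρ.sqrt) * (hρ.sqrt * hP.sqrt * hρ.sqrt)
        = hρ.sqrt * (hP.sqrt * ((hρ.sqrt * hρ.sqrt) * (hP.sqrt * hρ.sqrt))) := by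
      simp only [Matrix.mul_assoc]
    have h3 : hρ.sqrt * hTs'.sqrt * (hTs'.sqrt * hρ.sqrt)
        = hρ.sqrt * ((hTs'.sqrt * hTs'.sqrt) * hρ.sqrt) := by
      simp only [Matrix.mul_assoc]
    rw [h3, hTs'.sqrt_mul_self, h2, hρ.sqrt_mul_self]
    simp only [Matrix.mul_assoc]
  have hMM : (hρ.sqrt * (((Real.sqrt (((P * ρ).trace).re)⁻¹ : ℝ) : ℂ) • hTs'.sqrt)) * (hρ.sqrt * (((Real.sqrt (((P * ρ).trace).re)⁻¹ : ℝ) : ℂ) • hTs'.sqrt))ᴴ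
      = (((Real.sqrt (((P * ρ).trace).re)⁻¹ : ℝ) : ℂ) • (hρ.sqrt * hP.sqrt * hρ.sqrt)) ^ 2 := by
    rw [h1, sq]
    simp only [Matrix.mul_smul, Matrix.smul_mul, smul_smul]
    rw [hmat]
  have hsqrtMM : (Matrix.posSemidef_self_mul_conjTranspose
        (hρ.sqrt * (((Real.sqrt (((P * ρ).trace).re)⁻¹ : ℝ) : ℂ) • hTs'.sqrt))).sqrt = ((Real.sqrt (((P * ρ).trace).re)⁻¹ : ℝ) : ℂ) • (hρ.sqrt * hP.sqrt * hρ.sqrt) :=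
    ((smul_posSemidef hBpsd hr0).eq_sqrt_of_sq_eq _ hMM.symm).symm
  rw [hsqrtMM, Matrix.trace_smul]
  have hBtr : (hρ.sqrt * hP.sqrt * hρ.sqrt).trace = (hP.sqrt * ρ).trace := by
    rw [Matrix.mul_assoc, Matrix.trace_mul_comm, Matrix.mul_assoc, hρ.sqrt_mul_self]
  rw [hBtr]
  have hre : (((Real.sqrt (((P * ρ).trace).re)⁻¹ : ℝ) : ℂ) • (hP.sqrt * ρ).trace).re
      = Real.sqrt (((P * ρ).trace).re)⁻¹ * ((hP.sqrt * ρ).trace).re := by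
    rw [smul_eq_mul, Complex.re_ofReal_mul]
  rw [hre, Real.sqrt_inv]
  have hst : 0 < Real.sqrt (((P * ρ).trace).re) := Real.sqrt_pos.mpr ht0
  rw [le_inv_mul_iff₀ hst, Real.mul_self_sqrt ht0.le]
  -- final: t ≤ re tr(√P ρ)
  have h1Q : (1 - hP.sqrt).PosSemidef := one_sub_sqrt hP hPle
  have hRQR : hQpsd.sqrt * hP.sqrt * hQpsd.sqrt = P := by
    calc hQpsd.sqrt * hP.sqrt * hQpsd.sqrt
        = hQpsd.sqrt * (hQpsd.sqrt * hQpsd.sqrt) * hQpsd.sqrt := by rw [hQpsd.sqrt_mul_self]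
      _ = (hQpsd.sqrt * hQpsd.sqrt) * (hQpsd.sqrt * hQpsd.sqrt) := by
          simp only [Matrix.mul_assoc]
      _ = hP.sqrt * hP.sqrt := by rw [hQpsd.sqrt_mul_self]
      _ = P := hP.sqrt_mul_self
  have hQP : (hP.sqrt - P).PosSemidef := by
    have h := h1Q.mul_mul_conjTranspose_same hQpsd.sqrt
    rw [hQpsd.posSemidef_sqrt.1.eq] at h
    have e : hQpsd.sqrt * (1 - hP.sqrt) * hQpsd.sqrt = hP.sqrt - P := by
      rw [Matrix.mul_sub, Matrix.mul_one, Matrix.sub_mul, hQpsd.sqrt_mul_self, hRQR]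
    rwa [e] at h
  have h5 : 0 ≤ ((hP.sqrt - P) * ρ).trace := by
    have e : (hP.sqrt - P) * ρ = (hP.sqrt - P) * hρ.sqrt * hρ.sqrt := by
      rw [Matrix.mul_assoc, hρ.sqrt_mul_self]
    rw [e, Matrix.trace_mul_cycle]
    refine trace_nonneg ?_
    have h := hQP.mul_mul_conjTranspose_same hρ.sqrt
    rwa [hρs.1.eq] at h
  have h6 := (Complex.nonneg_iff.mp h5).1
  rw [Matrix.sub_mul, Matrix.trace_sub, Complex.sub_re] at h6
  linarith
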